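/- Let K ⊂ ℝ^n be a polytope (the convex hull of a finite set) and let v be an extreme point of K. Then the topological interior of the normal cone N_K(v) equals the set S(v) = {x ∈ ℝ^n : ⟨x, z − v⟩ < 0 for all z ∈ K with z ≠ v}. -/

import Mathlib

open Matrix

/-- The normal cone of a set `K ⊆ ℝⁿ` at a point `v`. -/
def normalCone {n : ℕ} (K : Set (Fin n → ℝ)) (v : Fin n → ℝ) : Set (Fin n → ℝ) :=
  {x | ∀ z ∈ K, x ⬝ᵥ (z - v) ≤ 0}

/-- For a polytope `K` (convex hull of a finite set) and an extreme point `v` of `K`,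
the topological interior of the normal cone at `v` is the set of directions making
strict angles with `z - v` for all `z ∈ K`, `z ≠ v`. -/
theorem interior_normalCone_eq (n : ℕ) (S : Set (Fin n → ℝ)) (hS : S.Finite)
    (K : Set (Fin n → ℝ)) (hK : K = convexHull ℝ S)
    (v : Fin n → ℝ) (hv : v ∈ K.extremePoints ℝ) :
    interior (normalCone K v) =
      {x : Fin n → ℝ | ∀ z ∈ K, z ≠ v → x ⬝ᵥ (z - v) < 0} := by
  classical
  apply Set.Subset.antisymm
  · -- interior N ⊆ strict set
    intro x hx z hz hzv
    have hxN : x ∈ normalCone K v := interior_subset hx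
    have hle : x ⬝ᵥ (z - v) ≤ 0 := hxN z hz
    rcases hle.lt_or_eq with h | h
    · exact h
    exfalso
    rcases Metric.mem_nhds_iff.mp (mem_interior_iff_mem_nhds.mp hx) with ⟨ε, hε, hball⟩
    set d : Fin n → ℝ := z - v with hd_def
    have hd : d ≠ 0 := sub_ne_zero.mpr hzv
    have hdn : (0:ℝ) < ‖d‖ := norm_pos_iff.mpr hd
    set c : ℝ := ε / (2 * ‖d‖) with hc_def
    have hc : 0 < c := div_pos hε (by positivity)
    have hy : x + c • d ∈ Metric.ball x ε := by
      rw [Metric.mem_ball, dist_eq_norm, add_sub_cancel_left, norm_smul,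
        Real.norm_eq_abs, abs_of_pos hc, hc_def]
      rw [div_mul_eq_mul_div, mul_comm (2:ℝ) ‖d‖, ← div_div, mul_div_assoc,
        div_self (ne_of_gt hdn), mul_one]
      linarith
    have hdd : 0 < d ⬝ᵥ d := by
      have h0 : d ⬝ᵥ d ≠ 0 := fun hh => hd (dotProduct_self_eq_zero.mp hh)
      have h1 : 0 ≤ d ⬝ᵥ d := Finset.sum_nonneg fun i _ => mul_self_nonneg _
      exact lt_of_le_of_ne h1 (Ne.symm h0)
    have hcontr : (x + c • d) ⬝ᵥ (z - v) ≤ 0 := hball hy z hz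
    rw [← hd_def, add_dotProduct, smul_dotProduct, smul_eq_mul, h] at hcontr
    nlinarith [mul_pos hc hdd]
  · -- strict set ⊆ interior N
    intro x hx
    have cont : ∀ w : Fin n → ℝ, Continuous fun y : Fin n → ℝ => y ⬝ᵥ w := by
      intro w
      simp only [dotProduct]
      exact continuous_finset_sum _ fun i _ => (continuous_apply i).mul continuous_const
    have hT : IsOpen {y : Fin n → ℝ | ∀ s ∈ S, s ≠ v → y ⬝ᵥ (s - v) < 0} := by
      have heq : {y : Fin n → ℝ | ∀ s ∈ S, s ≠ v → y ⬝ᵥ (s - v) < 0}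
          = ⋂ s ∈ S \ {v}, {y : Fin n → ℝ | y ⬝ᵥ (s - v) < 0} := by
        ext y
        simp only [Set.mem_setOf_eq, Set.mem_iInter, Set.mem_diff, Set.mem_singleton_iff]
        exact ⟨fun h s hs => h s hs.1 hs.2, fun h s hs hsv => h s ⟨hs, hsv⟩⟩
      rw [heq]
      exact hS.diff.isOpen_biInter fun s _ => isOpen_lt (cont _) continuous_const
    have hTN : {y : Fin n → ℝ | ∀ s ∈ S, s ≠ v → y ⬝ᵥ (s - v) < 0} ⊆ normalCone K v := by
      intro y hy z hz
      rw [hK] at hz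
      have hC : Convex ℝ {z : Fin n → ℝ | y ⬝ᵥ (z - v) ≤ 0} := by
        have heq : {z : Fin n → ℝ | y ⬝ᵥ (z - v) ≤ 0}
            = {z : Fin n → ℝ | (fun z => y ⬝ᵥ z) z ≤ y ⬝ᵥ v} := by
          ext z
          simp [dotProduct_sub, sub_nonpos]
        rw [heq]
        refine convex_halfSpace_le ⟨fun a b => dotProduct_add _ _ _, fun r a => ?_⟩ _
        simp [dotProduct_smul]
      have hSC : S ⊆ {z : Fin n → ℝ | y ⬝ᵥ (z - v) ≤ 0} := by
        intro s hs
        by_cases h : s = v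
        · simp [h]
        · exact le_of_lt (hy s hs h)
      exact convexHull_min hSC hC hz
    have hxT : x ∈ {y : Fin n → ℝ | ∀ s ∈ S, s ≠ v → y ⬝ᵥ (s - v) < 0} := by
      intro s hs hsv
      exact hx s (hK ▸ subset_convexHull ℝ S hs) hsv
    exact interior_maximal hTN hT hxT
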